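/- Let p be a prime and n ≥ 1 an integer. Then the p-adic valuation of n satisfies ν_p(n) = ⌊ (gcd(n, p^n)^(n+1) mod (p^(n+1) − 1)^2) / (p^(n+1) − 1) ⌋. -/

import Mathlib

lemma aux_pow_mod (M v : ℕ) : (1 + M) ^ v ≡ 1 + v * M [MOD M ^ 2] := by
  induction v with
  | zero => simp [Nat.ModEq.refl]
  | succ k ih =>
    calc (1 + M) ^ (k + 1) = (1 + M) ^ k * (1 + M) := by ring
    _ ≡ (1 + k * M) * (1 + M) [MOD M ^ 2] := ih.mul_right _
    _ = 1 + (k + 1) * M + k * M ^ 2 := by ring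
    _ ≡ 1 + (k + 1) * M + 0 [MOD M ^ 2] := by
        exact Nat.ModEq.add_left _ (by simpa using (Nat.modEq_zero_iff_dvd.2 (dvd_mul_left _ _)))
    _ = 1 + (k + 1) * M := by ring

/-- For a prime `p` and `n ≥ 1`, the p-adic valuation of `n` satisfies
`ν_p(n) = ⌊(gcd(n, p^n)^(n+1) mod (p^(n+1) − 1)^2) / (p^(n+1) − 1)⌋`. -/
theorem stmt_0 (p n : ℕ) (hp : p.Prime) (hn : 1 ≤ n) :
    padicValNat p n =
      (Nat.gcd n (p ^ n)) ^ (n + 1) % (p ^ (n + 1) - 1) ^ 2 / (p ^ (n + 1) - 1) := by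
  haveI : Fact p.Prime := ⟨hp⟩
  set v := padicValNat p n with hv
  have hn0 : n ≠ 0 := by omega
  have hdvd : p ^ v ∣ n := pow_padicValNat_dvd
  have hvn : v ≤ n := le_trans (Nat.le_of_lt (Nat.lt_pow_self (n := v) hp.one_lt))
    (Nat.le_of_dvd (by omega) hdvd)
  -- gcd n (p^n) = p^v
  have hgcd : Nat.gcd n (p ^ n) = p ^ v := by
    apply Nat.dvd_antisymm
    · obtain ⟨k, hk, hkeq⟩ := (Nat.dvd_prime_pow hp).1 (Nat.gcd_dvd_right n (p ^ n))
      rw [hkeq]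
      exact pow_dvd_pow p ((padicValNat_dvd_iff_le hn0).1 (hkeq ▸ Nat.gcd_dvd_left n (p ^ n)))
    · exact Nat.dvd_gcd hdvd (pow_dvd_pow p hvn)
  set M := p ^ (n + 1) - 1 with hM
  have hMpos : 2 ^ (n + 1) ≤ p ^ (n + 1) := Nat.pow_le_pow_left hp.two_le _
  have hM2 : 2 ≤ M := by
    have : 4 ≤ 2 ^ (n + 1) := by
      calc 4 = 2 ^ 2 := rfl
      _ ≤ 2 ^ (n + 1) := Nat.pow_le_pow_right (by norm_num) (by omega)
    omega
  have hvM : v < M := by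
    have h1 : n + 1 < 2 ^ (n + 1) := Nat.lt_two_pow_self (n := n + 1)
    omega
  have hkey : (Nat.gcd n (p ^ n)) ^ (n + 1) = (1 + M) ^ v := by
    rw [hgcd, ← pow_mul, mul_comm, pow_mul]
    congr 1
    have : 1 ≤ p ^ (n + 1) := Nat.one_le_pow _ _ hp.pos
    omega
  rw [hkey]
  have hmod : (1 + M) ^ v % M ^ 2 = 1 + v * M := by
    have := (aux_pow_mod M v)
    have hlt : 1 + v * M < M ^ 2 := by
      have : v * M ≤ (M - 1) * M := Nat.mul_le_mul_right M (by omega)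
      have h2 : (M - 1) * M + M = M ^ 2 := by
        have : (M - 1) + 1 = M := by omega
        nlinarith [this]
      omega
    calc (1 + M) ^ v % M ^ 2 = (1 + v * M) % M ^ 2 := this
    _ = 1 + v * M := Nat.mod_eq_of_lt hlt
  rw [hmod]
  rw [Nat.add_mul_div_right _ _ (by omega : 0 < M), Nat.div_eq_of_lt (by omega)]
  omega
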